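/- arXiv:2006.02403 — 4 statements merged into one kernel-verified Lean document; each statement's English description precedes it below -/
import Mathlib

section
/- Let R be an integral domain, r a natural number, and f, g ∈ R[ℤ^r] Laurent polynomials. Then the Newton polytope of the product satisfies N(f·g) = N(f) + N(g), where + denotes the Minkowski sum of subsets of ℝ^r. -/
open Pointwise

/-- The canonical embedding `ℤ^r → ℝ^r`. -/
noncomputable def latticeEmbed {r : ℕ} (l : Fin r → ℤ) : Fin r → ℝ :=
  fun i => (l i : ℝ)

/-- The Newton polytope of a Laurent polynomial `f ∈ R[ℤ^r]`: the convex hull in `ℝ^r`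
of the (images of the) exponents with nonzero coefficient. -/
noncomputable def newtonPolytope {R : Type*} [CommRing R] {r : ℕ}
    (f : AddMonoidAlgebra R (Fin r → ℤ)) : Set (Fin r → ℝ) :=
  convexHull ℝ (latticeEmbed '' (f.coeff.support : Set (Fin r → ℤ)))

lemma latticeEmbed_add {r : ℕ} (a b : Fin r → ℤ) :
    latticeEmbed (a + b) = latticeEmbed a + latticeEmbed b := by
  funext i; simp [latticeEmbed]

lemma latticeEmbed_injective {r : ℕ} : Function.Injective (latticeEmbed (r := r)) := by
  intro a b h
  funext i
  have h2 : ((a i : ℤ) : ℝ) = ((b i : ℤ) : ℝ) := congrFun h i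
  exact_mod_cast h2

/-- If `(lam, mu)` is the unique decomposition of `lam + mu` into supports, the coefficient
of the product at `lam + mu` is the product of coefficients. -/
lemma mul_apply_unique {R : Type*} [CommRing R] {r : ℕ}
    (f g : AddMonoidAlgebra R (Fin r → ℤ)) (lam mu : Fin r → ℤ)
    (hlam : lam ∈ f.coeff.support) (hmu : mu ∈ g.coeff.support)
    (h : ∀ a ∈ f.coeff.support, ∀ b ∈ g.coeff.support, a + b = lam + mu → a = lam ∧ b = mu) :
    (f * g).coeff (lam + mu) = f.coeff lam * g.coeff mu := by
  classical
  have hrw : (f * g).coeff (lam + mu) =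
      ∑ a₁ ∈ f.coeff.support, ∑ a₂ ∈ g.coeff.support,
        (if a₁ + a₂ = lam + mu then f.coeff a₁ * g.coeff a₂ else 0) := by
    rw [AddMonoidAlgebra.coeff_mul]; rfl
  rw [hrw]
  rw [Finset.sum_eq_single_of_mem lam hlam (fun a₁ ha₁ hne => ?_),
      Finset.sum_eq_single_of_mem mu hmu (fun a₂ ha₂ hne => ?_), if_pos rfl]
  · rw [if_neg]
    intro heq
    exact hne (h lam hlam a₂ ha₂ heq).2
  · apply Finset.sum_eq_zero
    intro a₂ ha₂
    rw [if_neg]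
    intro heq
    exact hne (h a₁ ha₁ a₂ ha₂ heq).1

theorem newtonPolytope_mul_of_domain {R : Type*} [CommRing R] [IsDomain R] {r : ℕ}
    (f g : AddMonoidAlgebra R (Fin r → ℤ)) :
    newtonPolytope (f * g) = newtonPolytope f + newtonPolytope g := by
  classical
  set A : Set (Fin r → ℝ) := latticeEmbed '' (f.coeff.support : Set (Fin r → ℤ)) with hA
  set B : Set (Fin r → ℝ) := latticeEmbed '' (g.coeff.support : Set (Fin r → ℤ)) with hB
  have hAfin : A.Finite := (f.coeff.support.finite_toSet).image _
  have hBfin : B.Finite := (g.coeff.support.finite_toSet).image _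
  have hABfin : (A + B).Finite := hAfin.add hBfin
  have hRHS : newtonPolytope f + newtonPolytope g = convexHull ℝ (A + B) :=
    (convexHull_add A B).symm
  rw [hRHS]
  apply Set.Subset.antisymm
  · -- easy direction: support of product is contained in sum of supports
    apply convexHull_mono
    rintro x ⟨c, hc, rfl⟩
    have hc' : c ∈ f.coeff.support + g.coeff.support := AddMonoidAlgebra.support_coeff_mul_subset f g hc
    obtain ⟨a, ha, b, hb, rfl⟩ := Finset.mem_add.1 hc'
    exact ⟨latticeEmbed a, ⟨a, ha, rfl⟩, latticeEmbed b, ⟨b, hb, rfl⟩,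
      (latticeEmbed_add a b).symm⟩
  · -- hard direction via extreme points
    have hconv : Convex ℝ (convexHull ℝ (A + B)) := convex_convexHull ℝ _
    have hcomp : IsCompact (convexHull ℝ (A + B)) := hABfin.isCompact_convexHull ℝ
    have hext : (convexHull ℝ (A + B)).extremePoints ℝ ⊆
        latticeEmbed '' ((f * g).coeff.support : Set (Fin r → ℤ)) := by
      intro v hv
      have hvAB : v ∈ A + B := extremePoints_convexHull_subset hv
      obtain ⟨x, hx, y, hy, hxy⟩ := hvAB
      obtain ⟨a, ha, rfl⟩ := hx
      obtain ⟨b, hb, rfl⟩ := hy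
      -- uniqueness of decomposition at an extreme point
      have hxy' : latticeEmbed a + latticeEmbed b = v := hxy
      have huniq : ∀ a' ∈ f.coeff.support, ∀ b' ∈ g.coeff.support, a' + b' = a + b →
          a' = a ∧ b' = b := by
        intro a' ha' b' hb' hsum
        have hembed : latticeEmbed a' + latticeEmbed b' = v := by
          rw [← latticeEmbed_add, hsum, latticeEmbed_add]; exact hxy'
        have hpAB : latticeEmbed a + latticeEmbed b' ∈ convexHull ℝ (A + B) :=
          subset_convexHull ℝ _ ⟨latticeEmbed a, ⟨a, ha, rfl⟩,
            latticeEmbed b', ⟨b', hb', rfl⟩, rfl⟩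
        have hqAB : latticeEmbed a' + latticeEmbed b ∈ convexHull ℝ (A + B) :=
          subset_convexHull ℝ _ ⟨latticeEmbed a', ⟨a', ha', rfl⟩,
            latticeEmbed b, ⟨b, hb, rfl⟩, rfl⟩
        have hmid : v ∈ openSegment ℝ (latticeEmbed a + latticeEmbed b')
            (latticeEmbed a' + latticeEmbed b) := by
          refine ⟨1/2, 1/2, by norm_num, by norm_num, by norm_num, ?_⟩
          have h2 : (latticeEmbed a + latticeEmbed b') + (latticeEmbed a' + latticeEmbed b)
              = v + v := by
            calc (latticeEmbed a + latticeEmbed b') + (latticeEmbed a' + latticeEmbed b)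
                = (latticeEmbed a + latticeEmbed b) + (latticeEmbed a' + latticeEmbed b') := by
                  abel
              _ = v + v := by rw [hxy', hembed]
          calc (1/2 : ℝ) • (latticeEmbed a + latticeEmbed b')
                + (1/2 : ℝ) • (latticeEmbed a' + latticeEmbed b)
              = (1/2 : ℝ) • ((latticeEmbed a + latticeEmbed b')
                + (latticeEmbed a' + latticeEmbed b)) := (smul_add _ _ _).symm
            _ = (1/2 : ℝ) • (v + v) := by rw [h2]
            _ = v := by rw [smul_add, ← add_smul]; norm_num
        obtain ⟨hpv, hqv⟩ := (mem_extremePoints.1 hv).2 _ hpAB _ hqAB hmid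
        have hb'b : b' = b :=
          latticeEmbed_injective (add_left_cancel (hpv.trans hxy'.symm))
        have hsum' : a' + b = a + b := by rwa [hb'b] at hsum
        exact ⟨add_right_cancel hsum', hb'b⟩
      have hcoeff : (f * g).coeff (a + b) = f.coeff a * g.coeff b :=
        mul_apply_unique f g a b ha hb huniq
      have hne : (f * g).coeff (a + b) ≠ 0 := by
        rw [hcoeff]
        exact mul_ne_zero (Finsupp.mem_support_iff.1 ha) (Finsupp.mem_support_iff.1 hb)
      exact ⟨a + b, Finsupp.mem_support_iff.2 hne, by rw [latticeEmbed_add]; exact hxy'⟩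
    have hclosed : IsClosed (convexHull ℝ (latticeEmbed '' ((f * g).coeff.support :
        Set (Fin r → ℤ)))) :=
      (((f * g).coeff.support.finite_toSet).image _).isClosed_convexHull ℝ
    calc convexHull ℝ (A + B)
        = closure (convexHull ℝ ((convexHull ℝ (A + B)).extremePoints ℝ)) :=
          (closure_convexHull_extremePoints hcomp hconv).symm
      _ ⊆ closure (convexHull ℝ (latticeEmbed '' ((f * g).coeff.support : Set (Fin r → ℤ)))) :=
          closure_mono (convexHull_mono hext)
      _ = _ := hclosed.closure_eq
end

section
/- Let R be a commutative ring, r a natural number, and f, g ∈ R[ℤ^r] Laurent polynomials. Suppose that for every λ ∈ supp(f) whose image in ℝ^r is an extreme point of the Newton polytope N(f), the coefficient of f at λ is not a zero divisor in R. Then N(f·g) = N(f) + N(g), where + denotes the Minkowski sum of subsets of ℝ^r. -/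
open Pointwise

theorem newtonPolytope_mul_of_vertex_coeffs_nonZeroDivisors {R : Type*} [CommRing R] {r : ℕ}
    (f g : AddMonoidAlgebra R (Fin r → ℤ))
    (hf : ∀ l ∈ f.coeff.support, latticeEmbed l ∈ Set.extremePoints ℝ (newtonPolytope f) →
      f.coeff l ∈ nonZeroDivisors R) :
    newtonPolytope (f * g) = newtonPolytope f + newtonPolytope g := by
  classical
  have hembed_add : ∀ a b : Fin r → ℤ, latticeEmbed (a + b) = latticeEmbed a + latticeEmbed b := by
    intro a b; funext i; simp [latticeEmbed]
  have hembed_inj : Function.Injective (latticeEmbed (r := r)) := by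
    intro a b h; funext i; have := congr_fun h i; simp only [latticeEmbed] at this; exact_mod_cast this
  set A : Set (Fin r → ℝ) := latticeEmbed '' (f.coeff.support : Set (Fin r → ℤ)) with hA
  set B : Set (Fin r → ℝ) := latticeEmbed '' (g.coeff.support : Set (Fin r → ℤ)) with hB
  have hNf : newtonPolytope f = convexHull ℝ A := rfl
  have hNg : newtonPolytope g = convexHull ℝ B := rfl
  -- easy inclusion
  have h1 : newtonPolytope (f * g) ⊆ newtonPolytope f + newtonPolytope g := by
    rw [hNf, hNg, ← convexHull_add, newtonPolytope]
    apply convexHull_mono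
    rintro p ⟨l, hl, rfl⟩
    obtain ⟨a, ha, b, hb, rfl⟩ := Finset.mem_add.1 (AddMonoidAlgebra.support_coeff_mul_subset f g hl)
    exact ⟨latticeEmbed a, ⟨a, ha, rfl⟩, latticeEmbed b, ⟨b, hb, rfl⟩, (hembed_add a b).symm⟩
  -- the hard inclusion: extreme points of the sum lie in the support of `f * g`
  have key : Set.extremePoints ℝ (newtonPolytope f + newtonPolytope g)
      ⊆ latticeEmbed '' (((f * g).coeff.support : Set (Fin r → ℤ))) := by
    intro p hp
    have hpAB : p ∈ A + B := by
      have hp' : p ∈ Set.extremePoints ℝ (convexHull ℝ (A + B)) := by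
        rwa [convexHull_add, ← hNf, ← hNg]
      exact extremePoints_convexHull_subset hp'
    obtain ⟨a', ⟨l0, hl0, rfl⟩, b', ⟨m0, hm0, rfl⟩, rfl⟩ := hpAB
    set a : Fin r → ℝ := latticeEmbed l0 with ha_def
    set b : Fin r → ℝ := latticeEmbed m0 with hb_def
    have haA : a ∈ convexHull ℝ A := subset_convexHull ℝ A ⟨l0, hl0, rfl⟩
    have hbB : b ∈ convexHull ℝ B := subset_convexHull ℝ B ⟨m0, hm0, rfl⟩
    -- uniqueness of the decomposition of the extreme point `a + b`
    have uniq : ∀ x ∈ convexHull ℝ A, ∀ y ∈ convexHull ℝ B, x + y = a + b →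
        x = a ∧ y = b := by
      intro x hx y hy hxy
      have hmem : a + b ∈ openSegment ℝ (x + b) (a + y) := by
        refine ⟨1/2, 1/2, by norm_num, by norm_num, by norm_num, ?_⟩
        rw [← smul_add]
        have h2 : (x + b) + (a + y) = (a + b) + (a + b) := by
          have : (x + b) + (a + y) = (x + y) + (a + b) := by abel
          rw [this, hxy]
        rw [h2, ← two_smul ℝ, smul_smul]
        norm_num
      have h2 := (mem_extremePoints.1 hp).2 _ (Set.add_mem_add hx hbB) _ (Set.add_mem_add haA hy) hmem
      exact ⟨add_right_cancel h2.1, add_left_cancel h2.2⟩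
    -- `a` is an extreme point of the Newton polytope of `f`
    have haext : a ∈ Set.extremePoints ℝ (newtonPolytope f) := by
      refine mem_extremePoints.2 ⟨haA, ?_⟩
      intro u hu v hv hseg
      obtain ⟨s, t, hs, ht, hst, heq⟩ := hseg
      have hmem : a + b ∈ openSegment ℝ (u + b) (v + b) := by
        refine ⟨s, t, hs, ht, hst, ?_⟩
        rw [smul_add, smul_add]
        have : s • u + s • b + (t • v + t • b) = (s • u + t • v) + (s + t) • b := by
          rw [add_smul]; abel
        rw [this, heq, hst, one_smul]
      have h2 := (mem_extremePoints.1 hp).2 _ (Set.add_mem_add hu hbB) _ (Set.add_mem_add hv hbB) hmem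
      exact ⟨add_right_cancel h2.1, add_right_cancel h2.2⟩
    -- hence only one pair of exponents contributes to the coefficient at `l0 + m0`
    have expuniq : ∀ a₁ ∈ f.coeff.support, ∀ a₂ ∈ g.coeff.support, a₁ + a₂ = l0 + m0 →
        a₁ = l0 ∧ a₂ = m0 := by
      intro a₁ h₁ a₂ h₂ h
      have h' := uniq (latticeEmbed a₁) (subset_convexHull ℝ A ⟨a₁, h₁, rfl⟩)
        (latticeEmbed a₂) (subset_convexHull ℝ B ⟨a₂, h₂, rfl⟩)
        (by rw [← hembed_add, h, hembed_add])
      exact ⟨hembed_inj h'.1, hembed_inj h'.2⟩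
    have hfl0 : f.coeff l0 ∈ nonZeroDivisors R := hf l0 hl0 haext
    have hcoeff : (f * g).coeff (l0 + m0) = f.coeff l0 * g.coeff m0 := by
      rw [AddMonoidAlgebra.coeff_mul, Finsupp.sum]
      have step1 :
          (∑ a₁ ∈ f.coeff.support, g.coeff.sum fun a₂ b₂ => if a₁ + a₂ = l0 + m0 then f.coeff a₁ * b₂ else 0)
            = g.coeff.sum fun a₂ b₂ => if l0 + a₂ = l0 + m0 then f.coeff l0 * b₂ else 0 := by
        refine Finset.sum_eq_single_of_mem l0 hl0 fun c hc hne => ?_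
        rw [Finsupp.sum]
        refine Finset.sum_eq_zero fun d hd => ?_
        rw [if_neg]
        intro hcontra
        exact hne (expuniq c hc d hd hcontra).1
      rw [step1, Finsupp.sum]
      refine (Finset.sum_eq_single_of_mem m0 hm0 fun d hd hne => ?_).trans (if_pos rfl)
      rw [if_neg]
      intro hcontra
      exact hne (expuniq l0 hl0 d hd hcontra).2
    have hne : (f * g).coeff (l0 + m0) ≠ 0 := by
      rw [hcoeff]
      intro h0
      have : g.coeff m0 = 0 := (mem_nonZeroDivisors_iff.mp hfl0).2 (g.coeff m0) (by rwa [mul_comm] at h0)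
      exact Finsupp.mem_support_iff.1 hm0 this
    exact ⟨l0 + m0, Finsupp.mem_support_iff.2 hne, hembed_add l0 m0⟩
  -- conclude via Krein–Milman
  apply Set.Subset.antisymm h1
  have hcompA : IsCompact (convexHull ℝ A) := (f.coeff.support.finite_toSet.image _).isCompact_convexHull ℝ
  have hcompB : IsCompact (convexHull ℝ B) := (g.coeff.support.finite_toSet.image _).isCompact_convexHull ℝ
  have hS : IsCompact (newtonPolytope f + newtonPolytope g) := by
    rw [hNf, hNg]; exact hcompA.add hcompB
  have hSconv : Convex ℝ (newtonPolytope f + newtonPolytope g) := by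
    rw [hNf, hNg]; exact (convex_convexHull ℝ A).add (convex_convexHull ℝ B)
  rw [← closure_convexHull_extremePoints hS hSconv]
  have hclosed : IsClosed (newtonPolytope (f * g)) :=
    (((f * g).coeff.support.finite_toSet.image _).isCompact_convexHull ℝ).isClosed
  exact hclosed.closure_subset_iff.2
    (convexHull_min (key.trans (subset_convexHull ℝ _)) (convex_convexHull ℝ _))
end

section
/- Let R be a commutative ring and f ∈ R[ℤ^r] a Laurent polynomial. Then there exist finitely many nonzero vectors d₁, …, d_k ∈ ℤ^r such that for every w ∈ ℤ^r with ⟨w, dᵢ⟩ ≠ 0 for all i (i.e., w outside the finite union of hyperplanes {x ∈ ℝ^r : ⟨x, dᵢ⟩ = 0}), the Laurent polynomial f_w ∈ R[ℤ] obtained from f by transporting exponents along the group homomorphism λ ↦ ⟨w, λ⟩ (mapDomain) satisfies N(f_w) = π_w(N(f)), where π_w : ℝ^r → ℝ is the linear map x ↦ ⟨w, x⟩ and N(f_w) is viewed as a subset of ℝ. -/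
/-- The Newton polytope of a one-variable Laurent polynomial `f ∈ R[ℤ]`, as a subset of `ℝ`. -/
noncomputable def newtonPolytope₁ {R : Type*} [CommRing R]
    (f : AddMonoidAlgebra R ℤ) : Set ℝ :=
  convexHull ℝ ((fun n : ℤ => (n : ℝ)) '' (f.coeff.support : Set ℤ))

/-- Restriction of exponents along the pairing with `w ∈ ℤ^r`: the one-variable Laurent
polynomial obtained from `f` by transporting exponents along `λ ↦ ⟨w, λ⟩`. -/
noncomputable def restrictExponents {R : Type*} [CommRing R] {r : ℕ}
    (w : Fin r → ℤ) (f : AddMonoidAlgebra R (Fin r → ℤ)) : AddMonoidAlgebra R ℤ :=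
  AddMonoidAlgebra.ofCoeff (Finsupp.mapDomain (fun l : Fin r → ℤ => ∑ i, w i * l i) f.coeff)

/-- For all `w` outside a finite union of integral hyperplanes, the Newton polytope of the
restriction of `f` along `w` is the projection of the Newton polytope of `f`. -/
theorem newtonPolytope_restrictExponents_generic {R : Type*} [CommRing R] {r : ℕ}
    (f : AddMonoidAlgebra R (Fin r → ℤ)) :
    ∃ (k : ℕ) (d : Fin k → (Fin r → ℤ)), (∀ i, d i ≠ 0) ∧
      ∀ w : Fin r → ℤ, (∀ i, (∑ j, w j * d i j) ≠ 0) →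
        newtonPolytope₁ (restrictExponents w f)
          = (fun x : Fin r → ℝ => ∑ i, (w i : ℝ) * x i) '' newtonPolytope f := by
  classical
  set S := f.coeff.support with hS
  set D : Finset (Fin r → ℤ) :=
    ((S ×ˢ S).filter (fun p => p.1 ≠ p.2)).image (fun p => p.1 - p.2) with hD
  refine ⟨D.card, fun i => (D.equivFin.symm i : Fin r → ℤ), ?_, ?_⟩
  · intro i
    have hmem : (D.equivFin.symm i : Fin r → ℤ) ∈ D := (D.equivFin.symm i).2
    simp only [hD, Finset.mem_image, Finset.mem_filter] at hmem
    obtain ⟨p, ⟨_, hne⟩, hp⟩ := hmem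
    intro h
    exact hne (sub_eq_zero.mp (hp.trans h))
  · intro w hw
    -- every element of D pairs nonzero with w
    have hwD : ∀ v ∈ D, (∑ j, w j * v j) ≠ 0 := by
      intro v hv
      have := hw (D.equivFin ⟨v, hv⟩)
      simpa using this
    -- injectivity on support
    have hinj : Set.InjOn (fun l : Fin r → ℤ => ∑ i, w i * l i) (S : Set (Fin r → ℤ)) := by
      intro a ha b hb hab
      by_contra hne
      have hmem : a - b ∈ D := by
        rw [hD]
        exact Finset.mem_image.mpr ⟨(a, b), Finset.mem_filter.mpr
          ⟨Finset.mem_product.mpr ⟨ha, hb⟩, hne⟩, rfl⟩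
      apply hwD _ hmem
      simp only [Pi.sub_apply, mul_sub, Finset.sum_sub_distrib]
      simpa using sub_eq_zero.mpr hab
    have hsupp : (restrictExponents w f).coeff.support =
        S.image (fun l : Fin r → ℤ => ∑ i, w i * l i) :=
      Finsupp.mapDomain_support_of_injOn f.coeff hinj
    -- the linear projection
    let L : (Fin r → ℝ) →ₗ[ℝ] ℝ :=
      { toFun := fun x => ∑ i, (w i : ℝ) * x i
        map_add' := by
          intro x y
          simp [mul_add, Finset.sum_add_distrib]
        map_smul' := by
          intro c x
          simp only [smul_eq_mul, RingHom.id_apply, Finset.mul_sum, Pi.smul_apply]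
          exact Finset.sum_congr rfl fun i _ => by ring }
    have key : ((fun n : ℤ => (n : ℝ)) '' ((restrictExponents w f).coeff.support : Set ℤ))
        = L '' (latticeEmbed '' (S : Set (Fin r → ℤ))) := by
      rw [hsupp, Finset.coe_image, ← Set.image_comp, ← Set.image_comp]
      apply Set.image_congr
      intro l _
      simp only [Function.comp, L, latticeEmbed, LinearMap.coe_mk, AddHom.coe_mk]
      push_cast
      rfl
    rw [newtonPolytope₁, key, newtonPolytope]
    exact (L.image_convexHull _).symm
end

section
/- Let S, T ⊆ ℝⁿ be nonempty finite sets and set P = conv(S), Q = conv(T). Then every extreme point w of the Minkowski sum P + Q admits a unique decomposition w = p + q with p ∈ P and q ∈ Q; moreover, in this decomposition p is an extreme point of P and q is an extreme point of Q. -/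
open Pointwise

/-- Every extreme point of a Minkowski sum of two polytopes `P = conv S`, `Q = conv T`
decomposes uniquely as `p + q` with `p ∈ P`, `q ∈ Q`; moreover `p` is an extreme point of `P`
and `q` is an extreme point of `Q`. -/
theorem extremePoint_minkowski_sum_unique_decomposition {n : ℕ}
    (S T : Finset (Fin n → ℝ)) (hS : S.Nonempty) (hT : T.Nonempty)
    (P Q : Set (Fin n → ℝ))
    (hP : P = convexHull ℝ (S : Set (Fin n → ℝ)))
    (hQ : Q = convexHull ℝ (T : Set (Fin n → ℝ))) :
    ∀ w ∈ Set.extremePoints ℝ (P + Q),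
      ∃ p q : Fin n → ℝ,
        p ∈ Set.extremePoints ℝ P ∧ q ∈ Set.extremePoints ℝ Q ∧ w = p + q ∧
        ∀ p' q' : Fin n → ℝ, p' ∈ P → q' ∈ Q → w = p' + q' → p' = p ∧ q' = q := by
  intro w hw
  obtain ⟨hwmem, hwext⟩ := hw
  obtain ⟨p, hp, q, hq, rfl⟩ := hwmem
  refine ⟨p, q, ⟨hp, ?_⟩, ⟨hq, ?_⟩, rfl, ?_⟩
  · intro x₁ hx₁ x₂ hx₂ hseg
    obtain ⟨a, b, ha, hb, hab, hsum⟩ := hseg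
    have hmem : p + q ∈ openSegment ℝ (x₁ + q) (x₂ + q) := by
      refine ⟨a, b, ha, hb, hab, ?_⟩
      have : a • (x₁ + q) + b • (x₂ + q) = (a • x₁ + b • x₂) + (a + b) • q := by
        simp [smul_add, add_smul]; abel
      rw [this, hab, one_smul, hsum]
    have h := hwext (Set.add_mem_add hx₁ hq) (Set.add_mem_add hx₂ hq) hmem
    exact add_right_cancel h
  · intro x₁ hx₁ x₂ hx₂ hseg
    obtain ⟨a, b, ha, hb, hab, hsum⟩ := hseg
    have hmem : p + q ∈ openSegment ℝ (p + x₁) (p + x₂) := by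
      refine ⟨a, b, ha, hb, hab, ?_⟩
      have : a • (p + x₁) + b • (p + x₂) = (a + b) • p + (a • x₁ + b • x₂) := by
        simp [smul_add, add_smul]; abel
      rw [this, hab, one_smul, hsum]
    have h := hwext (Set.add_mem_add hp hx₁) (Set.add_mem_add hp hx₂) hmem
    exact add_left_cancel h
  · intro p' q' hp' hq' heq
    have hmem : p + q ∈ openSegment ℝ (p + q') (p' + q) := by
      refine ⟨1/2, 1/2, by norm_num, by norm_num, by norm_num, ?_⟩
      have : (1/2 : ℝ) • (p + q') + (1/2 : ℝ) • (p' + q)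
          = (1/2 : ℝ) • ((p + q) + (p' + q')) := by
        simp [smul_add]; abel
      rw [this, ← heq]
      rw [show (p + q) + (p + q) = (2 : ℝ) • (p + q) by rw [two_smul], smul_smul]
      norm_num
    have h := hwext (Set.add_mem_add hp hq') (Set.add_mem_add hp' hq) hmem
    have hq'q : q' = q := add_left_cancel h
    rw [hq'q] at heq
    exact ⟨add_right_cancel heq.symm, hq'q⟩
end
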